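/- arXiv:1011.1484 — 3 statements merged into one kernel-verified Lean document; each statement's English description precedes it below -/
import Mathlib

section
/- With A = Λ•E* ⊗_R R[t], d(f)=t·ιₛ(f) as above, and s a Koszul-regular element of the finitely generated projective R-module E, the localized dg algebra A[t⁻¹] = Λ•E* ⊗_R R[t,t⁻¹] has cohomology H(A[t⁻¹]) ≅ (R/I)[t,t⁻¹], where I = {f(s) : f ∈ E*} is the ideal generated by the image of contraction with s. -/
open Module TensorProduct

/-- Contraction `ιₛ` against `s : E` on the exterior algebra `Λ•E*`
(the Koszul differential). -/
noncomputable def koszulContraction (R : Type) [CommRing R]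
    (E : Type) [AddCommGroup E] [Module R E] (s : E) :
    ExteriorAlgebra R (Dual R E) →ₗ[R] ExteriorAlgebra R (Dual R E) :=
  CliffordAlgebra.contractLeft (Q := (0 : QuadraticForm R (Dual R E))) (Dual.eval R E s)

/-- The differential `dL(f ⊗ p) = ιₛ(f) ⊗ t·p` of the localized dg algebra
`A[t⁻¹] = Λ•E* ⊗_R R[t,t⁻¹]`. -/
noncomputable def localizedKoszulDualDiff (R : Type) [CommRing R]
    (E : Type) [AddCommGroup E] [Module R E] (s : E) :
    TensorProduct R (ExteriorAlgebra R (Dual R E)) (LaurentPolynomial R) →ₗ[R]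
      TensorProduct R (ExteriorAlgebra R (Dual R E)) (LaurentPolynomial R) :=
  TensorProduct.map (koszulContraction R E s) (LinearMap.mulLeft R (LaurentPolynomial.T 1))

set_option synthInstance.maxHeartbeats 1000000
set_option maxHeartbeats 1000000

section Aux

variable (R : Type) [CommRing R] (E : Type) [AddCommGroup E] [Module R E] (s : E)

local notation "Λ" => ExteriorAlgebra R (Dual R E)
local notation "L" => LaurentPolynomial R
local notation "Iₛ" => Ideal.span (Set.range fun f : Dual R E => f s)

lemma kc_one : koszulContraction R E s (1 : Λ) = 0 :=
  CliffordAlgebra.contractLeft_one _ _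

lemma amInv_ι (f : Dual R E) :
    ExteriorAlgebra.algebraMapInv (ExteriorAlgebra.ι R f) = 0 := by
  simp [ExteriorAlgebra.algebraMapInv]

lemma amInv_kc_mem (x : Λ) :
    ExteriorAlgebra.algebraMapInv (koszulContraction R E s x) ∈ Iₛ := by
  induction x using CliffordAlgebra.left_induction with
  | algebraMap r => simp [koszulContraction]
  | add x y hx hy =>
      rw [map_add, map_add]; exact Ideal.add_mem _ hx hy
  | ι_mul x m hx =>
      rw [koszulContraction, CliffordAlgebra.contractLeft_ι_mul, map_sub, map_smul, map_mul]
      refine Ideal.sub_mem _ ?_ ?_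
      · simp only [Dual.eval_apply, smul_eq_mul]
        exact Ideal.mul_mem_right _ _ (Ideal.subset_span ⟨m, rfl⟩)
      · rw [show ExteriorAlgebra.algebraMapInv
            (CliffordAlgebra.ι (0 : QuadraticForm R (Dual R E)) m) = 0 from amInv_ι R E m,
          zero_mul]
        exact Ideal.zero_mem _

lemma algebraMap_mem_range (c : R) (hc : c ∈ Iₛ) :
    algebraMap R Λ c ∈ LinearMap.range (koszulContraction R E s) := by
  induction hc using Submodule.span_induction with
  | mem x hx =>
      obtain ⟨f, rfl⟩ := hx
      exact ⟨ExteriorAlgebra.ι R f, by simp [koszulContraction]⟩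
  | zero => simp
  | add x y _ _ hx hy => rw [map_add]; exact Submodule.add_mem _ hx hy
  | smul r x _ hx =>
      obtain ⟨y, hy⟩ := hx
      exact ⟨r • y, by rw [map_smul, hy, smul_eq_mul, Algebra.smul_def, map_mul]⟩

lemma deg0_cohomology
    (hreg : LinearMap.ker (koszulContraction R E s) =
      LinearMap.range (koszulContraction R E s) ⊔
        Submodule.span R {(1 : Λ)})
    (x : Λ) (hx : koszulContraction R E s x = 0)
    (hI : ExteriorAlgebra.algebraMapInv x ∈ Iₛ) :
    x ∈ LinearMap.range (koszulContraction R E s) := by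
  have hx' : x ∈ LinearMap.range (koszulContraction R E s) ⊔
      Submodule.span R {(1 : Λ)} := hreg ▸ LinearMap.mem_ker.mpr hx
  obtain ⟨y, hy, z, hz, rfl⟩ := Submodule.mem_sup.mp hx'
  obtain ⟨c, rfl⟩ := Submodule.mem_span_singleton.mp hz
  obtain ⟨w, rfl⟩ := hy
  have hc : c ∈ Iₛ := by
    have h1 := amInv_kc_mem R E s w
    have h2 : ExteriorAlgebra.algebraMapInv
        (koszulContraction R E s w + c • (1 : Λ)) =
        ExteriorAlgebra.algebraMapInv (koszulContraction R E s w) + c := by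
      rw [map_add, map_smul, map_one, smul_eq_mul, mul_one]
    have h3 := hI
    rw [h2] at h3
    simpa using Ideal.sub_mem _ h3 h1
  refine Submodule.add_mem _ (LinearMap.mem_range_self _ w) ?_
  have := algebraMap_mem_range R E s c hc
  rwa [Algebra.algebraMap_eq_smul_one] at this

/-- `D₀ = δ ⊗ id`. -/
noncomputable def kd0 : TensorProduct R Λ L →ₗ[R] TensorProduct R Λ L :=
  LinearMap.rTensor L (koszulContraction R E s)

/-- multiplication by `T` on `Λ ⊗ L`, as an equivalence -/
noncomputable def mulTequiv : TensorProduct R Λ L ≃ₗ[R] TensorProduct R Λ L :=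
  LinearEquiv.ofLinear
    (LinearMap.lTensor Λ (LinearMap.mulLeft R (LaurentPolynomial.T 1)))
    (LinearMap.lTensor Λ (LinearMap.mulLeft R (LaurentPolynomial.T (-1))))
    (by rw [← LinearMap.lTensor_comp, ← LinearMap.mulLeft_mul, ← LaurentPolynomial.T_add]
        norm_num [LinearMap.mulLeft_one, LinearMap.lTensor_id])
    (by rw [← LinearMap.lTensor_comp, ← LinearMap.mulLeft_mul, ← LaurentPolynomial.T_add]
        norm_num [LinearMap.mulLeft_one, LinearMap.lTensor_id])

lemma D_eq_left : localizedKoszulDualDiff R E s =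
    (mulTequiv R E : TensorProduct R Λ L →ₗ[R] TensorProduct R Λ L) ∘ₗ kd0 R E s := by
  apply TensorProduct.ext'
  intro x p
  simp [localizedKoszulDualDiff, kd0, mulTequiv]

lemma D_eq_right : localizedKoszulDualDiff R E s =
    kd0 R E s ∘ₗ (mulTequiv R E : TensorProduct R Λ L →ₗ[R] TensorProduct R Λ L) := by
  apply TensorProduct.ext'
  intro x p
  simp [localizedKoszulDualDiff, kd0, mulTequiv]

lemma ker_D_eq : LinearMap.ker (localizedKoszulDualDiff R E s) = LinearMap.ker (kd0 R E s) := by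
  rw [D_eq_left, LinearMap.ker_comp, LinearEquiv.ker, Submodule.comap_bot]

lemma range_D_eq : LinearMap.range (localizedKoszulDualDiff R E s)
    = LinearMap.range (kd0 R E s) := by
  rw [D_eq_right, LinearMap.range_comp, LinearEquiv.range, Submodule.map_top]

/-- the Finsupp picture -/
noncomputable def eΛ : TensorProduct R Λ L ≃ₗ[R] (ℤ →₀ Λ) :=
  LinearEquiv.lTensor Λ (AddMonoidAlgebra.coeffLinearEquiv R) ≪≫ₗ
    TensorProduct.finsuppScalarRight R R Λ ℤ

lemma eΛ_kd0 (z : TensorProduct R Λ L) :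
    eΛ R E (kd0 R E s z) =
      Finsupp.mapRange.linearMap (koszulContraction R E s) (eΛ R E z) := by
  have : (eΛ R E).toLinearMap ∘ₗ kd0 R E s =
      (Finsupp.mapRange.linearMap (koszulContraction R E s)) ∘ₗ (eΛ R E).toLinearMap := by
    apply TensorProduct.ext'
    intro x p
    ext n
    simp only [LinearMap.coe_comp, LinearEquiv.coe_coe, Function.comp_apply, kd0,
      LinearMap.rTensor_tmul, eΛ, Finsupp.mapRange.linearMap_apply, Finsupp.mapRange_apply]
    simp [LinearEquiv.trans_apply, map_smul]
  exact LinearMap.congr_fun this z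

lemma mapRange_range (g : ℤ →₀ Λ)
    (hg : ∀ n, g n ∈ LinearMap.range (koszulContraction R E s)) :
    ∃ y : ℤ →₀ Λ, Finsupp.mapRange.linearMap (koszulContraction R E s) y = g := by
  revert hg
  induction g using Finsupp.induction with
  | zero => exact fun _ => ⟨0, map_zero _⟩
  | single_add a b f haf hb ih =>
      intro hg
      have hf : ∀ n, f n ∈ LinearMap.range (koszulContraction R E s) := by
        intro n
        by_cases hna : n = a
        · subst hna
          rw [Finsupp.notMem_support_iff.mp haf]
          exact Submodule.zero_mem _
        · have := hg n
          rwa [Finsupp.add_apply, Finsupp.single_apply,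
            if_neg (fun h => hna h.symm), zero_add] at this
      have hb' : b ∈ LinearMap.range (koszulContraction R E s) := by
        have := hg a
        rwa [Finsupp.add_apply, Finsupp.single_eq_same,
          Finsupp.notMem_support_iff.mp haf, add_zero] at this
      obtain ⟨w, hw⟩ := hb'
      obtain ⟨y, hy⟩ := ih hf
      refine ⟨Finsupp.single a w + y, ?_⟩
      rw [map_add, hy]
      congr 1
      rw [Finsupp.mapRange.linearMap_apply, Finsupp.mapRange_single, hw]

/-- the cohomology class map, valued in `(R/I)[t,t⁻¹] = ℤ →₀ R/I`. -/
noncomputable def kPhi : TensorProduct R Λ L →ₗ[R] (ℤ →₀ R ⧸ Iₛ) :=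
  Finsupp.mapRange.linearMap
      ((Iₛ).mkQ ∘ₗ (ExteriorAlgebra.algebraMapInv : Λ →ₐ[R] R).toLinearMap) ∘ₗ
    (eΛ R E).toLinearMap

lemma kPhi_apply (z : TensorProduct R Λ L) (n : ℤ) :
    kPhi R E s z n = (Iₛ).mkQ (ExteriorAlgebra.algebraMapInv ((eΛ R E z) n)) := by
  simp only [kPhi, LinearMap.coe_comp, LinearEquiv.coe_coe, Function.comp_apply,
    Finsupp.mapRange.linearMap_apply, Finsupp.mapRange_apply, Submodule.mkQ_apply,
    AlgHom.toLinearMap_apply]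

lemma kPhi_kd0 (z : TensorProduct R Λ L) : kPhi R E s (kd0 R E s z) = 0 := by
  ext n
  rw [kPhi_apply, eΛ_kd0, Finsupp.mapRange.linearMap_apply, Finsupp.mapRange_apply]
  simp only [Finsupp.coe_zero, Pi.zero_apply, Submodule.mkQ_apply]
  rw [Submodule.Quotient.mk_eq_zero]
  exact amInv_kc_mem R E s _

lemma kPhi_zero_of_mem_range (x : TensorProduct R Λ L)
    (hx : x ∈ LinearMap.range (localizedKoszulDualDiff R E s)) :
    kPhi R E s x = 0 := by
  rw [range_D_eq] at hx
  obtain ⟨z, rfl⟩ := hx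
  exact kPhi_kd0 R E s z

lemma mem_range_of_kPhi
    (hreg : LinearMap.ker (koszulContraction R E s) =
      LinearMap.range (koszulContraction R E s) ⊔
        Submodule.span R {(1 : Λ)})
    (x : TensorProduct R Λ L)
    (hx : x ∈ LinearMap.ker (localizedKoszulDualDiff R E s))
    (h0 : kPhi R E s x = 0) :
    x ∈ LinearMap.range (localizedKoszulDualDiff R E s) := by
  rw [ker_D_eq] at hx
  have hxker : kd0 R E s x = 0 := hx
  have hδ : ∀ n, koszulContraction R E s ((eΛ R E x) n) = 0 := by
    intro n
    have h1 : Finsupp.mapRange.linearMap (koszulContraction R E s) (eΛ R E x) = 0 := by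
      rw [← eΛ_kd0, hxker, map_zero]
    have := DFunLike.congr_fun h1 n
    simpa [Finsupp.mapRange_apply] using this
  have hψ0 : ∀ n, ExteriorAlgebra.algebraMapInv ((eΛ R E x) n) ∈ Iₛ := by
    intro n
    have := DFunLike.congr_fun h0 n
    rw [kPhi_apply] at this
    simp only [Finsupp.coe_zero, Pi.zero_apply, Submodule.mkQ_apply] at this
    rwa [Submodule.Quotient.mk_eq_zero] at this
  have hrange : ∀ n, (eΛ R E x) n ∈ LinearMap.range (koszulContraction R E s) := fun n =>
    deg0_cohomology R E s hreg _ (hδ n) (hψ0 n)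
  obtain ⟨y, hy⟩ := mapRange_range R E s _ hrange
  rw [range_D_eq]
  refine ⟨(eΛ R E).symm y, ?_⟩
  apply (eΛ R E).injective
  rw [eΛ_kd0, LinearEquiv.apply_symm_apply, hy]

lemma kPhi_surj (q : ℤ →₀ R ⧸ Iₛ) :
    ∃ x ∈ LinearMap.ker (localizedKoszulDualDiff R E s), kPhi R E s x = q := by
  induction q using Finsupp.induction with
  | zero => exact ⟨0, Submodule.zero_mem _, map_zero _⟩
  | single_add a b f _ _ ih =>
      obtain ⟨x, hxk, hx⟩ := ih
      obtain ⟨r, hr⟩ := Submodule.mkQ_surjective (Iₛ) b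
      set x0 : TensorProduct R Λ L :=
        (r • (1 : Λ)) ⊗ₜ[R] (LaurentPolynomial.T a : L) with hx0
      have hker : x0 ∈ LinearMap.ker (localizedKoszulDualDiff R E s) := by
        rw [ker_D_eq, LinearMap.mem_ker, hx0, kd0, LinearMap.rTensor_tmul, map_smul,
          kc_one, smul_zero, TensorProduct.zero_tmul]
      refine ⟨x0 + x, Submodule.add_mem _ hker hxk, ?_⟩
      rw [map_add, hx]
      congr 1
      ext n
      rw [kPhi_apply]
      have he : (eΛ R E x0) n = (Finsupp.single a (1 : R)) n • (r • (1 : Λ)) := by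
        rw [hx0, eΛ]
        simp only [LinearEquiv.trans_apply, LinearEquiv.lTensor_tmul,
          TensorProduct.finsuppScalarRight_apply_tmul_apply]
        rfl
      rw [he, Finsupp.single_apply, Finsupp.single_apply]
      by_cases han : a = n
      · rw [if_pos han, if_pos han, one_smul, map_smul, map_one, smul_eq_mul, mul_one,
          Submodule.mkQ_apply]
        exact hr ▸ rfl
      · rw [if_neg han, if_neg han, zero_smul, map_zero, map_zero]

end Aux


/-- With `A = Λ•E* ⊗_R R[t]`, `d(f) = t·ιₛ(f)`, and `s` a Koszul-regular
element of the finitely generated projective `R`-module `E` (encoded, via the contraction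
operator `δ = ιₛ` on `Λ•E*`, by `ker δ = range δ ⊔ R·1`, i.e. the Koszul complex is exact
except in degree `0`), the localized dg algebra `A[t⁻¹] = Λ•E* ⊗_R R[t,t⁻¹]` has
cohomology `H(A[t⁻¹]) ≅ (R/I)[t,t⁻¹]` where `I = {f(s) : f ∈ E*}` is the ideal generated
by the image of contraction with `s`.  The cohomology `ker dL / range dL` is presented as
an `R`-linear surjection from the cocycles `ker dL` onto `(R/I)[t,t⁻¹]` whose kernel is
exactly the coboundaries. -/
theorem localized_koszul_dual_cohomology
    (R : Type) [CommRing R]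
    (E : Type) [AddCommGroup E] [Module R E] [Module.Finite R E] [Module.Projective R E]
    (s : E)
    (hreg : LinearMap.ker (koszulContraction R E s) =
      LinearMap.range (koszulContraction R E s) ⊔
        Submodule.span R {(1 : ExteriorAlgebra R (Dual R E))}) :
    ∃ h : ↥(LinearMap.ker (localizedKoszulDualDiff R E s)) →ₗ[R]
        LaurentPolynomial (R ⧸ Ideal.span (Set.range fun f : Dual R E => f s)),
      Function.Surjective h ∧
      LinearMap.ker h =
        (LinearMap.range (localizedKoszulDualDiff R E s)).comap
          (LinearMap.ker (localizedKoszulDualDiff R E s)).subtype := by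
  refine ⟨(AddMonoidAlgebra.coeffLinearEquiv R).symm.toLinearMap ∘ₗ
    kPhi R E s ∘ₗ (LinearMap.ker (localizedKoszulDualDiff R E s)).subtype, ?_, ?_⟩
  · intro q
    obtain ⟨x, hxk, hx⟩ := kPhi_surj R E s (AddMonoidAlgebra.coeffLinearEquiv R q)
    exact ⟨⟨x, hxk⟩, by simp [hx]⟩
  · ext x
    rw [LinearMap.mem_ker, Submodule.mem_comap, LinearMap.comp_apply, LinearEquiv.coe_coe,
      LinearEquiv.map_eq_zero_iff]
    constructor
    · intro h0
      exact mem_range_of_kPhi R E s hreg _ x.2 h0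
    · intro hx
      exact kPhi_zero_of_mem_range R E s _ hx
end

section
/- Let T be a triangulated category, S ⊂ T a full triangulated subcategory closed under direct summands, F: T → T' an exact functor to a triangulated category T' such that F(X) ≅ 0 for all X ∈ S. Suppose G: T' → T is exact with: (i) the unit Id_T → G∘F has cone in S for every object, and (ii) the counit F∘G → Id_{T'} is an isomorphism. Then F induces an equivalence of triangulated categories T/S ≃ T'. -/
open CategoryTheory Limits Pretriangulated

/-- Let `T` be a (pre)triangulated category, `S ⊆ T` a full triangulated
subcategory closed under direct summands (retracts), and `F : T → T'` an exact
(triangulated) functor with `F(X) ≅ 0` for all `X ∈ S`.  Suppose `G : T' → T` is exact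
with a unit `η : Id_T → G∘F` whose cone at every object lies in `S`, and a counit
`ε : F∘G → Id_{T'}` which is an isomorphism.  Then `F` induces an equivalence of
triangulated categories `T/S ≃ T'`; this is stated in the standard Mathlib form:
`F` is a localization functor with respect to the class `W(S)` of morphisms whose cone
lies in `S`, i.e. `F` identifies `T'` with the Verdier quotient `T/S`. -/
theorem verdier_quotient_equivalence
    (T : Type) [Category T] [Preadditive T] [HasZeroObject T] [HasShift T ℤ]
    [∀ n : ℤ, (shiftFunctor T n).Additive] [Pretriangulated T]
    (T' : Type) [Category T'] [Preadditive T'] [HasZeroObject T'] [HasShift T' ℤ]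
    [∀ n : ℤ, (shiftFunctor T' n).Additive] [Pretriangulated T']
    (S : ObjectProperty T) [S.IsTriangulated]
    -- `S` is closed under direct summands (retracts):
    (hthick : ∀ (X Y : T) (i : X ⟶ Y) (r : Y ⟶ X), i ≫ r = 𝟙 X → S Y → S X)
    (F : T ⥤ T') [F.CommShift ℤ] [F.IsTriangulated]
    -- `F` kills the objects of `S`:
    (hFS : ∀ X : T, S X → IsZero (F.obj X))
    (G : T' ⥤ T) [G.CommShift ℤ] [G.IsTriangulated]
    (η : 𝟭 T ⟶ F ⋙ G)
    -- (i) the cone of the unit lies in `S` for every object: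
    (hη : ∀ X : T, ∃ (Z : T) (_ : S Z) (g : (F ⋙ G).obj X ⟶ Z) (h : Z ⟶ X⟦(1 : ℤ)⟧),
      Triangle.mk (η.app X) g h ∈ distTriang T)
    (ε : G ⋙ F ⟶ 𝟭 T')
    -- (ii) the counit is an isomorphism:
    (hε : IsIso ε) :
    F.IsLocalization S.trW := by
  -- `F` inverts `S.trW`: if the cone of `f` lies in `S`, then `F` sends the
  -- distinguished triangle to one whose third object is zero, so `F.map f` is iso.
  have hF : S.trW.IsInvertedBy F := by
    rintro X Y f ⟨Z, g, h, hT, hZ⟩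
    exact (Triangle.isZero₃_iff_isIso₁ _ (F.map_distinguished _ hT)).1 (hFS Z hZ)
  -- `η.app X` lies in `S.trW` for every `X`, hence `S.trW.Q` inverts it.
  have hQη : ∀ (X : T), IsIso ((Functor.whiskerRight η S.trW.Q).app X) := by
    intro X
    obtain ⟨Z, hZ, g, h, hT⟩ := hη X
    exact Localization.inverts S.trW.Q S.trW _ ⟨Z, g, h, hT, hZ⟩
  have : IsIso (Functor.whiskerRight η S.trW.Q) := NatIso.isIso_of_isIso_app _
  have : IsIso ε := hε
  -- the lifted functor `S.trW.Localization ⥤ T'` is an equivalence with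
  -- quasi-inverse `G ⋙ S.trW.Q`.
  let e : S.trW.Localization ≌ T' := CategoryTheory.Equivalence.mk (Localization.lift F hF S.trW.Q)
    (G ⋙ S.trW.Q)
    (Localization.liftNatIso S.trW.Q S.trW S.trW.Q (F ⋙ G ⋙ S.trW.Q) _ _
      (S.trW.Q.leftUnitor.symm ≪≫ asIso (Functor.whiskerRight η S.trW.Q) ≪≫ Functor.associator _ _ _))
    (Functor.associator _ _ _ ≪≫ Functor.isoWhiskerLeft _ (Localization.fac F hF S.trW.Q) ≪≫
      asIso ε)
  exact Functor.IsLocalization.of_equivalence_target S.trW.Q S.trW F e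
    (Localization.fac F hF S.trW.Q)
end

section
/- Let R be a commutative ring, M a ℤ-graded module over the ℤ-graded ring R[t,t⁻¹] (t in degree −1). The natural multiplication map R[t,t⁻¹] ⊗_{R[t]} M_{≤0} → M, a ⊗ n ↦ a·n, is an isomorphism of R[t,t⁻¹]-modules, where M_{≤0} = ⊕_{j ≤ 0} M_j is the non-positively graded part of M, viewed as an R[t]-module. -/
open TensorProduct

/-- An `R[t]`-module structure on any module over the Laurent polynomial ring,
by restriction of scalars along the localization map `R[t] → R[t,t⁻¹]`. -/
noncomputable instance polyModuleOfLaurentModule (R : Type) [CommRing R]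
    (M : Type) [AddCommGroup M] [Module (LaurentPolynomial R) M] :
    Module (Polynomial R) M :=
  Module.compHom M (algebraMap (Polynomial R) (LaurentPolynomial R))

/-- Every element of `R[t,t⁻¹] ⊗_{R[t]} P` is a pure tensor `T (-n) ⊗ p`. -/
theorem laurent_tensor_rep (R : Type) [CommRing R]
    (P : Type) [AddCommGroup P] [Module (Polynomial R) P]
    (z : TensorProduct (Polynomial R) (LaurentPolynomial R) P) :
    ∃ (n : ℕ) (p : P), z = (LaurentPolynomial.T (-(n : ℤ))) ⊗ₜ[Polynomial R] p := by
  have key : ∀ (n k : ℕ) (p : P),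
      (LaurentPolynomial.T (-(n : ℤ)) : LaurentPolynomial R) ⊗ₜ[Polynomial R] p
        = (LaurentPolynomial.T (-((n + k : ℕ) : ℤ))) ⊗ₜ[Polynomial R] ((Polynomial.X ^ k : Polynomial R) • p) := by
    intro n k p
    rw [← TensorProduct.smul_tmul]
    have : (Polynomial.X ^ k : Polynomial R) • (LaurentPolynomial.T (-((n + k : ℕ) : ℤ)) : LaurentPolynomial R)
        = LaurentPolynomial.T (-(n : ℤ)) := by
      rw [Algebra.smul_def, LaurentPolynomial.algebraMap_eq_toLaurent, Polynomial.toLaurent_X_pow,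
        ← LaurentPolynomial.T_add]
      congr 1
      push_cast
      ring
    rw [this]
  induction z using TensorProduct.induction_on with
  | zero => exact ⟨0, 0, by simp⟩
  | tmul a p =>
      obtain ⟨n, f, hf⟩ := a.exists_T_pow
      refine ⟨n, f • p, ?_⟩
      rw [TensorProduct.tmul_smul, TensorProduct.smul_tmul',
        Algebra.smul_def, LaurentPolynomial.algebraMap_eq_toLaurent, hf,
        mul_assoc, ← LaurentPolynomial.T_add, add_neg_cancel, LaurentPolynomial.T_zero, mul_one]
  | add x y hx hy =>
      obtain ⟨n, p, rfl⟩ := hx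
      obtain ⟨m, q, rfl⟩ := hy
      refine ⟨n + m, (Polynomial.X ^ m : Polynomial R) • p + (Polynomial.X ^ n : Polynomial R) • q, ?_⟩
      rw [TensorProduct.tmul_add, key n m p, key m n q, Nat.add_comm m n]

/-- Let `R` be a commutative ring and `M` a `ℤ`-graded module over the
`ℤ`-graded ring `R[t,t⁻¹]` (with `t` in degree `-1`, so `T k` has degree `-k` and maps
`M_j` to `M_{j-k}`).  Let `P` (with an `R[t]`-linear embedding `ι : P ↪ M`) be the
non-positively graded part `M_{≤0} = ⊕_{j ≤ 0} M_j` of `M`, viewed as an `R[t]`-module.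
Then the natural multiplication map `R[t,t⁻¹] ⊗_{R[t]} M_{≤0} → M`, `a ⊗ n ↦ a·n`,
is an isomorphism. -/
theorem laurent_tensor_nonpositive_part_iso
    (R : Type) [CommRing R]
    (M : Type) [AddCommGroup M] [Module (LaurentPolynomial R) M]
    [Module R M] [IsScalarTower R (LaurentPolynomial R) M]
    (𝒩 : ℤ → Submodule R M)
    (hinternal : DirectSum.IsInternal 𝒩)
    (hT : ∀ (k j : ℤ) (x : M), x ∈ 𝒩 j → ((LaurentPolynomial.T k : LaurentPolynomial R)) • x ∈ 𝒩 (j - k))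
    -- `P`, together with the `R[t]`-linear injection `ι`, is the non-positive part
    -- `M_{≤0} = ⊕_{j ≤ 0} M_j` of `M`:
    (P : Type) [AddCommGroup P] [Module (Polynomial R) P]
    (ι : P →ₗ[Polynomial R] M)
    (hinj : Function.Injective ι)
    (hrange : ∀ m : M, (∃ p : P, ι p = m) ↔ m ∈ ⨆ j ≤ (0 : ℤ), 𝒩 j)
    -- `μ` is the multiplication map `R[t,t⁻¹] ⊗_{R[t]} M_{≤0} → M`, `a ⊗ n ↦ a·n`:
    (μ : TensorProduct (Polynomial R) (LaurentPolynomial R) P →ₗ[Polynomial R] M)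
    (hμ : ∀ (a : LaurentPolynomial R) (p : P), μ (a ⊗ₜ[Polynomial R] p) = a • ι p) :
    Function.Bijective μ := by
  have Tmul : ∀ (k : ℤ) (m : M),
      (LaurentPolynomial.T (-k) : LaurentPolynomial R) • (LaurentPolynomial.T k : LaurentPolynomial R) • m = m := by
    intro k m
    rw [← mul_smul, ← LaurentPolynomial.T_add, neg_add_cancel, LaurentPolynomial.T_zero, one_smul]
  constructor
  · -- injectivity
    rw [injective_iff_map_eq_zero]
    intro z hz
    obtain ⟨n, p, rfl⟩ := laurent_tensor_rep R P z
    rw [hμ] at hz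
    have hι : ι p = 0 := by
      calc ι p = (LaurentPolynomial.T (n : ℤ) : LaurentPolynomial R) •
            (LaurentPolynomial.T (-(n : ℤ)) : LaurentPolynomial R) • ι p := by
            rw [← mul_smul, ← LaurentPolynomial.T_add, add_neg_cancel, LaurentPolynomial.T_zero, one_smul]
        _ = (LaurentPolynomial.T (n : ℤ) : LaurentPolynomial R) • (0 : M) := by rw [hz]
        _ = 0 := smul_zero _
    have : p = 0 := hinj (by rw [hι, map_zero])
    simp [this]
  · -- surjectivity
    intro m
    have htop : (⨆ j, 𝒩 j : Submodule R M) = ⊤ := hinternal.submodule_iSup_eq_top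
    have hm : m ∈ ⨆ j, 𝒩 j := htop ▸ Submodule.mem_top
    -- show each homogeneous piece is in the range of μ
    refine Submodule.iSup_induction 𝒩 (motive := fun m => ∃ z, μ z = m) hm ?_ ⟨0, by simp⟩ ?_
    · intro j x hx
      by_cases hj : j ≤ 0
      · obtain ⟨p, hp⟩ := (hrange x).mpr (Submodule.mem_iSup_of_mem j (Submodule.mem_iSup_of_mem hj hx))
        exact ⟨(1 : LaurentPolynomial R) ⊗ₜ p, by rw [hμ, hp, one_smul]⟩
      · have h0 : (LaurentPolynomial.T j : LaurentPolynomial R) • x ∈ 𝒩 0 := by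
          simpa using hT j j x hx
        have h0' : (LaurentPolynomial.T j : LaurentPolynomial R) • x ∈ ⨆ j ≤ (0 : ℤ), 𝒩 j :=
          Submodule.mem_iSup_of_mem 0 (Submodule.mem_iSup_of_mem le_rfl h0)
        obtain ⟨p, hp⟩ := (hrange _).mpr h0'
        exact ⟨(LaurentPolynomial.T (-j)) ⊗ₜ p, by rw [hμ, hp, Tmul]⟩
    · rintro x y ⟨zx, rfl⟩ ⟨zy, rfl⟩
      exact ⟨zx + zy, by simp⟩
end
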